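/- Let P and N be finite index sets, A a real P×N matrix, c_p > 0 for each p ∈ P, ρ > 0 a real exponent (ρ = 1.852 for the Hazen–Williams law, ρ = 2 for Darcy–Weisbach), and d ∈ ℝ^N. Suppose f̄ ∈ ℝ^P and h̄ ∈ ℝ^N satisfy Aᵀ f̄ = d and (A h̄)_p = c_p · sign(f̄_p) · |f̄_p|^ρ for every p ∈ P. Then f̄ is the unique minimizer of the convex function F_ρ(f) = ∑_{p∈P} (c_p/(ρ+1))|f_p|^{ρ+1} over the affine set {f ∈ ℝ^P : Aᵀ f = d}. -/

import Mathlib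

open Matrix

private lemma myDeriv_abs_rpow {ρ : ℝ} (hρ : 0 < ρ) (x : ℝ) :
    HasDerivAt (fun t : ℝ => |t| ^ (ρ + 1))
      ((ρ + 1) * Real.sign x * |x| ^ ρ) x := by
  rcases lt_trichotomy x 0 with hx | rfl | hx
  · have h1 : HasDerivAt (fun t : ℝ => (-t) ^ (ρ + 1))
        ((ρ + 1) * (-x) ^ (ρ + 1 - 1) * (-1)) x := by
      exact (Real.hasDerivAt_rpow_const (p := ρ + 1)
        (Or.inl (by linarith))).comp x (hasDerivAt_neg x)
    have h2 : (fun t : ℝ => (-t) ^ (ρ + 1)) =ᶠ[nhds x] fun t => |t| ^ (ρ + 1) := by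
      filter_upwards [eventually_lt_nhds hx] with t ht
      rw [abs_of_neg ht]
    have := h1.congr_of_eventuallyEq h2.symm
    refine this.congr_deriv ?_
    rw [Real.sign_of_neg hx, abs_of_neg hx]
    ring_nf
  · have : HasDerivAt (fun t : ℝ => |t| ^ (ρ + 1)) 0 0 := by
      rw [hasDerivAt_iff_tendsto_slope]
      have hb : ∀ t : ℝ, ‖slope (fun t : ℝ => |t| ^ (ρ + 1)) 0 t‖ ≤ |t| ^ ρ := by
        intro t
        rcases eq_or_ne t 0 with rfl | ht
        · simp [slope, Real.zero_rpow (by linarith : ρ + 1 ≠ 0), Real.zero_rpow hρ.ne']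
        · have h00 : |(0:ℝ)| ^ (ρ + 1) = 0 := by
            simp [Real.zero_rpow (by linarith : ρ + 1 ≠ 0)]
          have habs : |t| ≠ 0 := abs_ne_zero.mpr ht
          have heq : |t| ^ (ρ + 1) = |t| ^ ρ * |t| := by
            rw [Real.rpow_add (abs_pos.mpr ht), Real.rpow_one]
          have hs : slope (fun t : ℝ => |t| ^ (ρ + 1)) 0 t = |t| ^ (ρ + 1) / t := by
            rw [slope_def_field, h00, sub_zero, sub_zero]
          rw [hs, Real.norm_eq_abs, abs_div,
            abs_of_nonneg (Real.rpow_nonneg (abs_nonneg t) _), heq, mul_div_assoc,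
            div_self habs, mul_one]
      have htend : Filter.Tendsto (fun t : ℝ => |t| ^ ρ) (nhds 0) (nhds 0) := by
        have : ContinuousAt (fun t : ℝ => |t| ^ ρ) 0 :=
          ContinuousAt.rpow_const (continuous_abs.continuousAt) (Or.inr hρ.le)
        simpa [Real.zero_rpow hρ.ne'] using this.tendsto
      exact squeeze_zero_norm hb (htend.mono_left nhdsWithin_le_nhds)
    simpa [Real.sign_zero] using this
  · have h1 : HasDerivAt (fun t : ℝ => t ^ (ρ + 1))
        ((ρ + 1) * x ^ (ρ + 1 - 1)) x :=
      Real.hasDerivAt_rpow_const (Or.inl hx.ne')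
    have h2 : (fun t : ℝ => t ^ (ρ + 1)) =ᶠ[nhds x] fun t => |t| ^ (ρ + 1) := by
      filter_upwards [eventually_gt_nhds hx] with t ht
      rw [abs_of_pos ht]
    have := h1.congr_of_eventuallyEq h2.symm
    refine this.congr_deriv ?_
    rw [Real.sign_of_pos hx, abs_of_pos hx]
    ring_nf

private lemma strictMono_sign_rpow {ρ : ℝ} (hρ : 0 < ρ) :
    StrictMono (fun x : ℝ => Real.sign x * |x| ^ ρ) := by
  intro a b hab
  rcases le_or_gt 0 a with ha | ha
  · have hb : 0 < b := lt_of_le_of_lt ha hab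
    rcases eq_or_lt_of_le ha with rfl | ha'
    · simp only [Real.sign_zero, Real.sign_of_pos hb, abs_of_pos hb]
      simpa using Real.rpow_pos_of_pos hb ρ
    · simp only [Real.sign_of_pos ha', Real.sign_of_pos hb, abs_of_pos ha', abs_of_pos hb,
        one_mul]
      exact Real.rpow_lt_rpow ha'.le hab hρ
  · rcases lt_or_ge b 0 with hb | hb
    · simp only [Real.sign_of_neg ha, Real.sign_of_neg hb, abs_of_neg ha, abs_of_neg hb,
        neg_one_mul, neg_lt_neg_iff]
      exact Real.rpow_lt_rpow (by linarith) (by linarith) hρ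
    · have h1 : Real.sign a * |a| ^ ρ < 0 := by
        rw [Real.sign_of_neg ha, abs_of_neg ha]
        have := Real.rpow_pos_of_pos (by linarith : (0:ℝ) < -a) ρ
        nlinarith
      have h2 : 0 ≤ Real.sign b * |b| ^ ρ := by
        rcases eq_or_lt_of_le hb with rfl | hb'
        · simp
        · rw [Real.sign_of_pos hb', one_mul]
          positivity
      exact h1.trans_le h2

private lemma strictConvexOn_abs_rpow {ρ : ℝ} (hρ : 0 < ρ) :
    StrictConvexOn ℝ Set.univ (fun x : ℝ => |x| ^ (ρ + 1)) := by
  apply StrictMono.strictConvexOn_univ_of_deriv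
  · exact continuous_abs.rpow_const (fun x => Or.inr (by linarith))
  · have hd : deriv (fun x : ℝ => |x| ^ (ρ + 1)) =
        fun x => (ρ + 1) * Real.sign x * |x| ^ ρ := by
      funext x
      exact (myDeriv_abs_rpow hρ x).deriv
    rw [hd]
    have : StrictMono (fun x : ℝ => (ρ + 1) * (Real.sign x * |x| ^ ρ)) :=
      (strictMono_sign_rpow hρ).const_mul (by linarith : (0:ℝ) < ρ + 1)
    simpa [mul_assoc] using this

/-- Tangent-line strict inequality for the strictly convex `|·|^(ρ+1)`. -/
private lemma tangent_lt {ρ : ℝ} (hρ : 0 < ρ) {x y : ℝ} (hxy : x ≠ y) :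
    |x| ^ (ρ + 1) + (ρ + 1) * Real.sign x * |x| ^ ρ * (y - x) < |y| ^ (ρ + 1) := by
  set g : ℝ → ℝ := fun t => |t| ^ (ρ + 1) with hg
  have hconv := strictConvexOn_abs_rpow hρ
  have hder := myDeriv_abs_rpow hρ x
  rcases hxy.lt_or_gt with h | h
  · have := hconv.lt_slope_of_hasDerivAt (Set.mem_univ x) (Set.mem_univ y) h hder
    rw [slope_def_field] at this
    have hyx : 0 < y - x := by linarith
    rw [lt_div_iff₀ hyx] at this
    linarith
  · have := hconv.slope_lt_of_hasDerivAt (Set.mem_univ y) (Set.mem_univ x) h hder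
    rw [slope_def_field] at this
    have hxy' : 0 < x - y := by linarith
    rw [div_lt_iff₀ hxy'] at this
    linarith

/-- Generalized pressure-drop law with exponent `ρ > 0` (Hazen–Williams for
`ρ = 1.852`, Darcy–Weisbach for `ρ = 2`): a water-flow solution is the unique
minimizer of `F_ρ f = ∑ (c p / (ρ+1)) |f p|^(ρ+1)` over `{f : Aᵀ f = d}`. -/
theorem general_law_solution_is_unique_minimizer {P N : Type*} [Fintype P] [Fintype N]
    (A : Matrix P N ℝ) (c : P → ℝ) (hc : ∀ p, 0 < c p) (ρ : ℝ) (hρ : 0 < ρ)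
    (d : N → ℝ) (fbar : P → ℝ) (hbar : N → ℝ)
    (hfeas : Aᵀ.mulVec fbar = d)
    (hlaw : ∀ p, A.mulVec hbar p = c p * Real.sign (fbar p) * |fbar p| ^ ρ) :
    ∀ f : P → ℝ, Aᵀ.mulVec f = d → f ≠ fbar →
      ∑ p, c p / (ρ + 1) * |fbar p| ^ (ρ + 1) < ∑ p, c p / (ρ + 1) * |f p| ^ (ρ + 1) := by
  intro f hf hne
  -- the linear term vanishes by feasibility
  have hzero : ∑ p, A.mulVec hbar p * (f p - fbar p) = 0 := by
    have h1 : (A.mulVec hbar) ⬝ᵥ (f - fbar) = (f - fbar) ⬝ᵥ (A.mulVec hbar) :=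
      dotProduct_comm _ _
    have h2 : (f - fbar) ⬝ᵥ (A.mulVec hbar) = ((f - fbar) ᵥ* A) ⬝ᵥ hbar :=
      dotProduct_mulVec _ _ _
    have h3 : (f - fbar) ᵥ* A = Aᵀ.mulVec (f - fbar) := (mulVec_transpose A _).symm
    have h4 : Aᵀ.mulVec (f - fbar) = 0 := by
      rw [Matrix.mulVec_sub, hf, hfeas, sub_self]
    have : (A.mulVec hbar) ⬝ᵥ (f - fbar) = 0 := by
      rw [h1, h2, h3, h4, zero_dotProduct]
    simpa [dotProduct, Pi.sub_apply] using this
  -- pointwise estimates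
  have hkey : ∀ p, c p / (ρ + 1) * |fbar p| ^ (ρ + 1) + A.mulVec hbar p * (f p - fbar p)
      ≤ c p / (ρ + 1) * |f p| ^ (ρ + 1) := by
    intro p
    rcases eq_or_ne (f p) (fbar p) with h | h
    · rw [h]; simp
    · have := tangent_lt hρ (Ne.symm h : fbar p ≠ f p)
      have hcp := hc p
      have hq : (0:ℝ) < ρ + 1 := by linarith
      rw [hlaw p]
      have := mul_lt_mul_of_pos_left this (div_pos hcp hq)
      have hdiv : c p / (ρ + 1) * ((ρ + 1) * Real.sign (fbar p) * |fbar p| ^ ρ * (f p - fbar p))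
          = c p * Real.sign (fbar p) * |fbar p| ^ ρ * (f p - fbar p) := by
        field_simp
      nlinarith [this]
  have hstrict : ∃ p, c p / (ρ + 1) * |fbar p| ^ (ρ + 1) + A.mulVec hbar p * (f p - fbar p)
      < c p / (ρ + 1) * |f p| ^ (ρ + 1) := by
    obtain ⟨p, hp⟩ := Function.ne_iff.mp hne
    refine ⟨p, ?_⟩
    have := tangent_lt hρ (Ne.symm hp : fbar p ≠ f p)
    have hcp := hc p
    have hq : (0:ℝ) < ρ + 1 := by linarith
    rw [hlaw p]
    have := mul_lt_mul_of_pos_left this (div_pos hcp hq)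
    have hdiv : c p / (ρ + 1) * ((ρ + 1) * Real.sign (fbar p) * |fbar p| ^ ρ * (f p - fbar p))
        = c p * Real.sign (fbar p) * |fbar p| ^ ρ * (f p - fbar p) := by
      field_simp
    nlinarith [this]
  obtain ⟨p₀, hp₀⟩ := hstrict
  have hsum : ∑ p, (c p / (ρ + 1) * |fbar p| ^ (ρ + 1) + A.mulVec hbar p * (f p - fbar p))
      < ∑ p, c p / (ρ + 1) * |f p| ^ (ρ + 1) :=
    Finset.sum_lt_sum (fun p _ => hkey p) ⟨p₀, Finset.mem_univ p₀, hp₀⟩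
  rw [Finset.sum_add_distrib, hzero, add_zero] at hsum
  exact hsum
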